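/- Let h, k ≥ 2 be integers and let w = a^h b^k. For every n ≥ 1 define S_n = a^h (a^{2h} b^{2k}) (a b a^{h-1} b^{k-1})^n (a^{2h} b^{2k}) b^k. Then (S_n)_{n≥1} is a bad sequence of elements of LL(w) with respect to ⊢*_{{w}}: every S_n belongs to LL(w), and for all 1 ≤ i < j it is not the case that S_i ⊢*_{{w}} S_j. In particular, ⊢*_{{w}} is not a well quasi-order on LL(w). -/

import Mathlib

namespace ShuffleWqo

inductive AB : Type
  | a : AB
  | b : AB
  deriving DecidableEq

open AB

/-- The word `a^n`. -/
def wa (n : ℕ) : List AB := List.replicate n a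

/-- The word `b^n`. -/
def wb (n : ℕ) : List AB := List.replicate n b

/-- Concatenation power of a word: `npow u e = u^e`. -/
def npow (u : List AB) : ℕ → List AB
  | 0 => []
  | n + 1 => u ++ npow u n

/-- `Shuffle u v w` means `w` is a shuffle of `u` and `v`. -/
inductive Shuffle {α : Type*} : List α → List α → List α → Prop
  | nil : Shuffle [] [] []
  | left {x : α} {u v w : List α} : Shuffle u v w → Shuffle (x :: u) v (x :: w)
  | right {x : α} {u v w : List α} : Shuffle u v w → Shuffle u (x :: v) (x :: w)

/-- One derivation step: `w` is obtained from `v` by shuffling in a word of `I`. -/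
def Derives {α : Type*} (I : Set (List α)) (v w : List α) : Prop :=
  ∃ u ∈ I, Shuffle v u w

/-- The reflexive-transitive closure `⊢*_I`. -/
def DerivesStar {α : Type*} (I : Set (List α)) : List α → List α → Prop :=
  Relation.ReflTransGen (Derives I)

/-- The shuffle closure `LL(I)` of a set of words `I`. -/
def LL {α : Type*} (I : Set (List α)) : Set (List α) := { w | DerivesStar I [] w }

/-- `r` is a well quasi-order on the language `L`. -/
def IsWqoOn {α : Type*} (r : List α → List α → Prop) (L : Set (List α)) : Prop :=
  ∀ f : ℕ → List α, (∀ n, f n ∈ L) → ∃ i j, i < j ∧ r (f i) (f j)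

/-- The sequence `S_n` associated with `w = a^h b^k`. -/
def S2 (h k n : ℕ) : List AB :=
  wa h ++ (wa (2*h) ++ wb (2*k)) ++ npow ([a, b] ++ wa (h-1) ++ wb (k-1)) n ++
    (wa (2*h) ++ wb (2*k)) ++ wb k

lemma waa (m n : ℕ) : wa m ++ wa n = wa (m+n) := (List.replicate_add m n a).symm
lemma wbb (m n : ℕ) : wb m ++ wb n = wb (m+n) := (List.replicate_add m n b).symm
lemma waE {m n p : ℕ} (h : m + n = p) : wa m ++ wa n = wa p := by rw [waa, h]
lemma wbE {m n p : ℕ} (h : m + n = p) : wb m ++ wb n = wb p := by rw [wbb, h]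
lemma wa_cons {n : ℕ} (h : 1 ≤ n) : wa n = [a] ++ wa (n-1) := by
  rw [show [a] ++ wa (n-1) = wa (1 + (n-1)) from waa 1 (n-1)]; congr 1; omega
lemma wb_snoc {n : ℕ} (h : 1 ≤ n) : wb n = wb (n-1) ++ [b] := by
  rw [show wb (n-1) ++ [b] = wb ((n-1) + 1) from wbb (n-1) 1]; congr 1; omega
lemma wa_cons' {m n : ℕ} (h : 1 + m = n) : wa n = [a] ++ wa m := by
  rw [show [a] ++ wa m = wa (1+m) from waa 1 m, h]
lemma wb_snoc' {m n : ℕ} (h : m + 1 = n) : wb n = wb m ++ [b] := by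
  rw [show wb m ++ [b] = wb (m+1) from wbb m 1, h]
lemma npow_add (u : List AB) (m n : ℕ) : npow u (m+n) = npow u m ++ npow u n := by
  induction m with
  | zero => simp [npow]
  | succ m ih => simp [npow, ih, Nat.succ_add, List.append_assoc]
lemma sh_nil_left {α : Type*} (v : List α) : Shuffle [] v v := by
  induction v with
  | nil => exact Shuffle.nil
  | cons x v ih => exact Shuffle.right ih
lemma sh_nil_right {α : Type*} (v : List α) : Shuffle v [] v := by
  induction v with
  | nil => exact Shuffle.nil
  | cons x v ih => exact Shuffle.left ih
lemma sh_append {α : Type*} {u₁ v₁ w₁ u₂ v₂ w₂ : List α}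
    (h₁ : Shuffle u₁ v₁ w₁) (h₂ : Shuffle u₂ v₂ w₂) :
    Shuffle (u₁ ++ u₂) (v₁ ++ v₂) (w₁ ++ w₂) := by
  induction h₁ with
  | nil => simpa using h₂
  | left _ ih => exact Shuffle.left ih
  | right _ ih => exact Shuffle.right ih
lemma sh_post {α : Type*} (x y : List α) : Shuffle x y (x ++ y) := by
  induction x with
  | nil => simpa using sh_nil_left y
  | cons c x ih => exact Shuffle.left ih
lemma sh_pre {α : Type*} (y x : List α) : Shuffle y x (x ++ y) := by
  induction x with
  | nil => simpa using sh_nil_right y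
  | cons c x ih => exact Shuffle.right ih

/-! ### Part I : membership in LL -/

section PartOne
variable (h k : ℕ)

def Blk : List AB := [a, b] ++ wa (h-1) ++ wb (k-1)
def U : List AB := wa h ++ wb k

def S2R (n : ℕ) : List AB :=
  wa (3*h) ++ wb (2*k) ++ npow (Blk h k) n ++ wa (2*h) ++ wb (3*k)

lemma S2_eq_S2R (n : ℕ) : S2 h k n = S2R h k n := by
  unfold S2 S2R Blk
  rw [show wa h ++ (wa (2*h) ++ wb (2*k)) ++ npow ([a, b] ++ wa (h-1) ++ wb (k-1)) n ++ (wa (2*h) ++ wb (2*k)) ++ wb k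
      = (wa h ++ wa (2*h)) ++ (wb (2*k) ++ (npow ([a, b] ++ wa (h-1) ++ wb (k-1)) n ++ wa (2*h) ++ (wb (2*k) ++ wb k))) by simp [List.append_assoc]]
  rw [waE (by omega : h + 2*h = 3*h), wbE (by omega : 2*k + k = 3*k)]
  simp [List.append_assoc]

def Ew (s : ℕ) : List AB :=
  wa (3*h) ++ wb (2*k+1) ++ wa h ++ wb (k-1) ++ npow (Blk h k) s ++ wa (2*h) ++ wb (3*k)

variable {h k}

lemma step2 : Shuffle (U h k) (U h k) (wa (2*h) ++ wb (2*k)) := by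
  rw [show wa (2*h) = wa h ++ wa h from (waE (by omega)).symm,
      show wb (2*k) = wb k ++ wb k from (wbE (by omega)).symm]
  have C := sh_append (sh_post (wa h) (wa h)) (sh_post (wb k) (wb k))
  simpa only [U, List.append_assoc] using C

lemma step3 : Shuffle (wa (2*h) ++ wb (2*k)) (U h k) (wa (3*h) ++ wb (3*k)) := by
  rw [show wa (3*h) = wa h ++ wa (2*h) from (waE (by omega)).symm,
      show wb (3*k) = wb (2*k) ++ wb k from (wbE (by omega)).symm]
  have C := sh_append (sh_pre (wa (2*h)) (wa h)) (sh_post (wb (2*k)) (wb k))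
  simpa only [U, List.append_assoc] using C

lemma step4 (hk : 2 ≤ k) : Shuffle (wa (3*h) ++ wb (3*k)) (U h k)
    (wa (3*h) ++ wb (2*k+1) ++ wa h ++ wb (2*k-1)) := by
  rw [show wb (3*k) = wb (2*k+1) ++ wb (k-1) from (wbE (by omega)).symm,
      show wb (2*k-1) = wb (k-1) ++ wb k from (wbE (by omega)).symm]
  have C := sh_append (sh_append (sh_append
      (sh_nil_right (wa (3*h))) (sh_nil_right (wb (2*k+1))))
      (sh_nil_left (wa h))) (sh_post (wb (k-1)) (wb k))
  simpa only [U, List.append_assoc, List.append_nil, List.nil_append] using C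

lemma step5 (hk : 2 ≤ k) : Shuffle (wa (3*h) ++ wb (2*k+1) ++ wa h ++ wb (2*k-1)) (U h k)
    (wa (3*h) ++ wb (2*k+1) ++ wa (2*h) ++ wb (3*k-1)) := by
  rw [show wa (2*h) = wa h ++ wa h from (waE (by omega)).symm,
      show wb (3*k-1) = wb (2*k-1) ++ wb k from (wbE (by omega)).symm]
  have C := sh_append (sh_append (sh_append
      (sh_nil_right (wa (3*h))) (sh_nil_right (wb (2*k+1))))
      (sh_pre (wa h) (wa h))) (sh_post (wb (2*k-1)) (wb k))
  simpa only [U, List.append_assoc, List.append_nil, List.nil_append] using C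

lemma step6 (hk : 2 ≤ k) : Shuffle (wa (3*h) ++ wb (2*k+1) ++ wa (2*h) ++ wb (3*k-1)) (U h k)
    (Ew h k 0) := by
  unfold Ew U
  rw [show npow (Blk h k) 0 = [] from rfl,
      show wb (3*k) = wb (3*k-1) ++ [b] from wb_snoc' (by omega),
      show (wb k : List AB) = wb (k-1) ++ [b] from wb_snoc' (by omega)]
  have C := sh_append (sh_append (sh_append (sh_append
      (sh_nil_right (wa (3*h))) (sh_nil_right (wb (2*k+1))))
      (sh_nil_left (wa h ++ wb (k-1)))) (sh_nil_right (wa (2*h))))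
      (sh_post (wb (3*k-1)) ([b]))
  simpa only [List.append_assoc, List.append_nil, List.nil_append] using C

lemma stepE (hh : 2 ≤ h) (hk : 2 ≤ k) (s : ℕ) :
    Shuffle (Ew h k s) (U h k) (Ew h k (s+1)) := by
  unfold Ew
  rw [show npow (Blk h k) (s+1) = Blk h k ++ npow (Blk h k) s from rfl]
  unfold Blk U
  rw [show (wa h : List AB) = [a] ++ wa (h-1) from wa_cons' (by omega),
      show (wb k : List AB) = wb (k-1) ++ [b] from wb_snoc' (by omega)]
  have C := sh_append (sh_append (sh_append (sh_append
      (sh_nil_right (wa (3*h))) (sh_nil_right (wb (2*k+1))))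
      (sh_nil_left (([a] ++ wa (h-1)) ++ wb (k-1))))
      (sh_post ([a]) ([b])))
      (sh_nil_right (wa (h-1) ++ wb (k-1) ++ npow (Blk h k) s ++ wa (2*h) ++ wb (3*k)))
  simpa only [Blk, List.append_assoc, List.append_nil, List.nil_append, List.cons_append] using C

lemma stepF (hh : 2 ≤ h) (hk : 2 ≤ k) (s : ℕ) :
    Shuffle (Ew h k s) (U h k) (S2R h k (s+2)) := by
  unfold Ew S2R
  rw [show npow (Blk h k) (s+2) = Blk h k ++ (Blk h k ++ npow (Blk h k) s) from rfl]
  unfold Blk U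
  rw [show wb (2*k+1) = wb (2*k) ++ [b] from wb_snoc' (by omega),
      show (wa h : List AB) = [a] ++ wa (h-1) from wa_cons' (by omega),
      show (wb k : List AB) = wb (k-1) ++ [b] from wb_snoc' (by omega)]
  have C := sh_append (sh_append (sh_append (sh_append (sh_append
      (sh_nil_right (wa (3*h))) (sh_nil_right (wb (2*k))))
      (sh_nil_left ([a])))
      (sh_post ([b]) (wa (h-1) ++ wb (k-1))))
      (sh_post ([a]) ([b])))
      (sh_nil_right (wa (h-1) ++ wb (k-1) ++ npow (Blk h k) s ++ wa (2*h) ++ wb (3*k)))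
  simpa only [Blk, List.append_assoc, List.append_nil, List.nil_append, List.cons_append] using C

lemma stepS1 (hh : 2 ≤ h) (hk : 2 ≤ k) :
    Shuffle (wa (3*h) ++ wb (2*k+1) ++ wa (2*h) ++ wb (3*k-1)) (U h k) (S2R h k 1) := by
  unfold S2R
  rw [show npow (Blk h k) 1 = Blk h k ++ [] from rfl]
  unfold Blk U
  rw [show wb (2*k+1) = wb (2*k) ++ [b] from wb_snoc' (by omega),
      show (wa h : List AB) = [a] ++ wa (h-1) from wa_cons' (by omega),
      show (wb k : List AB) = wb (k-1) ++ [b] from wb_snoc' (by omega),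
      show wb (3*k) = wb (3*k-1) ++ [b] from wb_snoc' (by omega)]
  have C := sh_append (sh_append (sh_append (sh_append
      (sh_nil_right (wa (3*h))) (sh_nil_right (wb (2*k))))
      (sh_nil_left ([a])))
      (sh_post ([b]) (wa (h-1) ++ wb (k-1))))
      (sh_append (sh_nil_right (wa (2*h) ++ wb (3*k-1))) (sh_nil_left ([b])))
  simpa only [List.append_assoc, List.append_nil, List.nil_append, List.cons_append] using C

/-- the derivation relation with the singleton set -/
lemma dstep {v w : List AB} (hs : Shuffle v (U h k) w) :
    Derives {wa h ++ wb k} v w := ⟨wa h ++ wb k, rfl, hs⟩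

lemma der_W5 (hh : 2 ≤ h) (hk : 2 ≤ k) :
    DerivesStar {wa h ++ wb k} [] (wa (3*h) ++ wb (2*k+1) ++ wa (2*h) ++ wb (3*k-1)) := by
  have d0 : DerivesStar {wa h ++ wb k} [] (U h k) :=
    Relation.ReflTransGen.single (dstep (sh_nil_left _))
  exact ((((d0.tail (dstep step2)).tail (dstep step3)).tail
    (dstep (step4 hk))).tail (dstep (step5 hk)))

lemma der_Ew (hh : 2 ≤ h) (hk : 2 ≤ k) (s : ℕ) :
    DerivesStar {wa h ++ wb k} [] (Ew h k s) := by
  induction s with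
  | zero => exact (der_W5 hh hk).tail (dstep (step6 hk))
  | succ s ih => exact ih.tail (dstep (stepE hh hk s))

lemma mem_LL_S2 (hh : 2 ≤ h) (hk : 2 ≤ k) (n : ℕ) (hn : 1 ≤ n) :
    S2 h k n ∈ LL {wa h ++ wb k} := by
  show DerivesStar {wa h ++ wb k} [] (S2 h k n)
  rw [S2_eq_S2R]
  rcases Nat.lt_or_ge n 2 with h1 | h2
  · have : n = 1 := by omega
    subst this
    exact (der_W5 hh hk).tail (dstep (stepS1 hh hk))
  · obtain ⟨s, rfl⟩ : ∃ s, n = s + 2 := ⟨n - 2, by omega⟩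
    exact (der_Ew hh hk s).tail (dstep (stepF hh hk s))

end PartOne

abbrev Ov := List (AB × Bool)

def mA (z : Ov) : ℕ := z.countP (fun p => p.1 == a && p.2)
def mB (z : Ov) : ℕ := z.countP (fun p => p.1 == b && p.2)
def unm (z : Ov) : List AB := (z.filter (fun p => !p.2)).map Prod.fst

@[simp] lemma mA_nil : mA [] = 0 := rfl
@[simp] lemma mB_nil : mB [] = 0 := rfl
@[simp] lemma unm_nil : unm [] = [] := rfl

@[simp] lemma mA_cons_at (z : Ov) : mA ((a, true) :: z) = mA z + 1 := by
  simp [mA, List.countP_cons]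
@[simp] lemma mA_cons_bt (z : Ov) : mA ((b, true) :: z) = mA z := by
  simp [mA, List.countP_cons]
@[simp] lemma mA_cons_f (x : AB) (z : Ov) : mA ((x, false) :: z) = mA z := by
  simp [mA, List.countP_cons]
@[simp] lemma mB_cons_bt (z : Ov) : mB ((b, true) :: z) = mB z + 1 := by
  simp [mB, List.countP_cons]
@[simp] lemma mB_cons_at (z : Ov) : mB ((a, true) :: z) = mB z := by
  simp [mB, List.countP_cons]
@[simp] lemma mB_cons_f (x : AB) (z : Ov) : mB ((x, false) :: z) = mB z := by
  simp [mB, List.countP_cons]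
@[simp] lemma unm_cons_t (x : AB) (z : Ov) : unm ((x, true) :: z) = unm z := by
  simp [unm]
@[simp] lemma unm_cons_f (x : AB) (z : Ov) : unm ((x, false) :: z) = x :: unm z := by
  simp [unm]

lemma mA_append (z₁ z₂ : Ov) : mA (z₁ ++ z₂) = mA z₁ + mA z₂ := by
  simp [mA, List.countP_append]
lemma mB_append (z₁ z₂ : Ov) : mB (z₁ ++ z₂) = mB z₁ + mB z₂ := by
  simp [mB, List.countP_append]
lemma unm_append (z₁ z₂ : Ov) : unm (z₁ ++ z₂) = unm z₁ ++ unm z₂ := by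
  simp [unm]

lemma div_succ_bound {h p e : ℕ} (hh : 1 ≤ h) (he : e ≤ h) : (p + e) / h ≤ p / h + 1 := by
  calc (p + e) / h ≤ (p + h) / h := Nat.div_le_div_right (by omega)
  _ = p / h + 1 := Nat.add_div_right p hh

section Insert
variable {h k : ℕ}

/-- inserting the `b`-part of a copy -/
lemma insertB (hh : 1 ≤ h) :
    ∀ {w v w'}, Shuffle w v w' → ∀ {f : ℕ}, v = wb f → ∀ {z : Ov} {p q : ℕ},
    z.map Prod.fst = w →
    (∀ n, (q + f) + mB (z.take n) ≤ k * ((p + mA (z.take n)) / h)) →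
    ∃ z' : Ov, z'.map Prod.fst = w' ∧ unm z' = unm z ∧ mA z' = mA z ∧ mB z' = mB z + f ∧
      ∀ n, q + mB (z'.take n) ≤ k * ((p + mA (z'.take n)) / h) := by
  intro w v w' hs
  induction hs with
  | nil =>
    intro f hf z p q hz H
    have hf0 : f = 0 := by
      have := congrArg List.length hf; simp [wb] at this; omega
    have hz0 : z = [] := by simpa using hz
    subst hz0 hf0
    exact ⟨[], rfl, rfl, rfl, by simp, fun n => by simpa using H 0⟩
  | @left x u v w hs ih =>
    intro f hf z p q hz H
    rcases z with _ | ⟨⟨y, c⟩, zt⟩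
    · simp at hz
    · have hyx : y = x ∧ zt.map Prod.fst = u := by simpa using hz
      obtain ⟨rfl, hzt⟩ := hyx
      -- head contribution
      rcases c with _ | _
      · obtain ⟨zt', h1, h2, h3, h4, h5⟩ := ih hf (z := zt) (p := p) (q := q) hzt
          (fun n => by have := H (n+1); simpa using this)
        refine ⟨(y, false) :: zt', by simp [h1], by simp [h2], by simp [h3], by simp [h4], ?_⟩
        intro n
        rcases n with _ | n
        · have := H 0; simpa using (by simp at this ⊢; omega : q ≤ k * (p / h))
        · have := h5 n; simpa using this
      · rcases y with _ | _
        · -- (a, true)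
          obtain ⟨zt', h1, h2, h3, h4, h5⟩ := ih hf (z := zt) (p := p + 1) (q := q) hzt
            (fun n => by have := H (n+1); simp at this ⊢; ring_nf at this ⊢; omega)
          refine ⟨(a, true) :: zt', by simp [h1], by simp [h2], by simp [h3], by simp [h4], ?_⟩
          intro n
          rcases n with _ | n
          · have := H 0; simp at this ⊢; omega
          · have := h5 n; simp at this ⊢; ring_nf at this ⊢; omega
        · -- (b, true)
          obtain ⟨zt', h1, h2, h3, h4, h5⟩ := ih hf (z := zt) (p := p) (q := q + 1) hzt
            (fun n => by have := H (n+1); simp at this ⊢; omega)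
          refine ⟨(b, true) :: zt', by simp [h1], by simp [h2], by simp [h3], by simp [h4]; omega, ?_⟩
          intro n
          rcases n with _ | n
          · have := H 0; simp at this ⊢; omega
          · have := h5 n; simp at this ⊢; omega
  | @right x u v w hs ih =>
    intro f hf z p q hz H
    have hx : x = b ∧ v = wb (f - 1) ∧ 1 ≤ f := by
      rcases f with _ | f'
      · simp [wb] at hf
      · rw [wb, List.replicate_succ] at hf
        injection hf with e1 e2
        exact ⟨e1, by simpa [wb] using e2, by omega⟩
    obtain ⟨rfl, hv, hf1⟩ := hx
    obtain ⟨zt', h1, h2, h3, h4, h5⟩ := ih hv (z := z) (p := p) (q := q + 1) hz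
      (fun n => by have := H n; omega)
    refine ⟨(b, true) :: zt', by simp [h1], by simp [h2], by simp [h3], by simp [h4]; omega, ?_⟩
    intro n
    rcases n with _ | n
    · have := H 0; simp at this ⊢; omega
    · have := h5 n; simp at this ⊢; omega

end Insert



section Insert2
variable {h k : ℕ}

lemma insertA (hh : 1 ≤ h) (hk : 1 ≤ k) :
    ∀ {w v w'}, Shuffle w v w' → ∀ {e : ℕ}, v = wa e ++ wb k → e ≤ h → ∀ {z : Ov} {p q : ℕ},
    z.map Prod.fst = w →
    (∀ n, (q + k) + mB (z.take n) ≤ k * ((p + e + mA (z.take n)) / h)) →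
    ∃ z' : Ov, z'.map Prod.fst = w' ∧ unm z' = unm z ∧ mA z' = mA z + e ∧ mB z' = mB z + k ∧
      ∀ n, q + mB (z'.take n) ≤ k * ((p + mA (z'.take n)) / h) := by
  intro w v w' hs
  induction hs with
  | nil =>
    intro e hv he z p q hz H
    exfalso
    have := congrArg List.length hv
    simp [wa, wb] at this
    omega
  | @left x u v w hs ih =>
    intro e hv he z p q hz H
    have key0 : q ≤ k * (p / h) := by
      have h0 := H 0
      simp at h0
      have d1 : (p + e) / h ≤ p / h + 1 := div_succ_bound hh he
      have d2 := Nat.mul_le_mul_left k d1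
      have d3 : k * (p/h + 1) = k * (p/h) + k := by ring
      omega
    rcases z with _ | ⟨⟨y, c⟩, zt⟩
    · simp at hz
    · have hyx : y = x ∧ zt.map Prod.fst = u := by simpa using hz
      obtain ⟨rfl, hzt⟩ := hyx
      rcases c with _ | _
      · obtain ⟨zt', h1, h2, h3, h4, h5⟩ := ih hv he (z := zt) (p := p) (q := q) hzt
          (fun n => by have := H (n+1); simpa using this)
        refine ⟨(y, false) :: zt', by simp [h1], by simp [h2], by simp [h3], by simp [h4], ?_⟩
        intro n
        rcases n with _ | n
        · simpa using key0
        · have := h5 n; simpa using this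
      · rcases y with _ | _
        · obtain ⟨zt', h1, h2, h3, h4, h5⟩ := ih hv he (z := zt) (p := p + 1) (q := q) hzt
            (fun n => by have := H (n+1); simp at this ⊢; ring_nf at this ⊢; omega)
          refine ⟨(a, true) :: zt', by simp [h1], by simp [h2], by simp [h3]; omega, by simp [h4], ?_⟩
          intro n
          rcases n with _ | n
          · simpa using key0
          · have := h5 n; simp at this ⊢; ring_nf at this ⊢; omega
        · obtain ⟨zt', h1, h2, h3, h4, h5⟩ := ih hv he (z := zt) (p := p) (q := q + 1) hzt
            (fun n => by have := H (n+1); simp at this ⊢; omega)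
          refine ⟨(b, true) :: zt', by simp [h1], by simp [h2], by simp [h3], by simp [h4]; omega, ?_⟩
          intro n
          rcases n with _ | n
          · simpa using key0
          · have := h5 n; simp at this ⊢; omega
  | @right x u v w hs ih =>
    intro e hv he z p q hz H
    have key0 : q ≤ k * (p / h) := by
      have h0 := H 0
      simp at h0
      have d1 : (p + e) / h ≤ p / h + 1 := div_succ_bound hh he
      have d2 := Nat.mul_le_mul_left k d1
      have d3 : k * (p/h + 1) = k * (p/h) + k := by ring
      omega
    rcases e with _ | e'
    · -- e = 0 : switch to b-phase
      have hx : x = b ∧ v = wb (k - 1) := by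
        rcases k with _ | k'
        · omega
        · rw [wa, wb, List.replicate_zero, List.nil_append, List.replicate_succ] at hv
          injection hv with e1 e2
          exact ⟨e1, by simpa [wb] using e2⟩
      obtain ⟨rfl, hv'⟩ := hx
      obtain ⟨zt', h1, h2, h3, h4, h5⟩ := insertB (k := k) hh hs hv' (z := z) (p := p) (q := q + 1) hz
        (fun n => by have := H n; simp at this; omega)
      refine ⟨(b, true) :: zt', by simp [h1], by simp [h2], by simp [h3], by simp [h4]; omega, ?_⟩
      intro n
      rcases n with _ | n
      · simpa using key0
      · have := h5 n; simp at this ⊢; omega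
    · -- e = e' + 1 : an `a` of the copy
      have hx : x = a ∧ v = wa e' ++ wb k := by
        rw [wa, List.replicate_succ] at hv
        injection hv with e1 e2
        exact ⟨e1, by simpa [wa] using e2⟩
      obtain ⟨rfl, hv'⟩ := hx
      obtain ⟨zt', h1, h2, h3, h4, h5⟩ := ih hv' (by omega) (z := z) (p := p + 1) (q := q) hz
        (fun n => by have := H n; simp at this ⊢; ring_nf at this ⊢; omega)
      refine ⟨(a, true) :: zt', by simp [h1], by simp [h2], by simp [h3]; omega, by simp [h4], ?_⟩
      intro n
      rcases n with _ | n
      · simpa using key0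
      · have := h5 n; simp at this ⊢; ring_nf at this ⊢; omega

def GOk (h k : ℕ) (z : Ov) : Prop := ∀ n, mB (z.take n) ≤ k * (mA (z.take n) / h)

lemma ok_step (hh : 1 ≤ h) (hk : 1 ≤ k) {w w' : List AB} {z : Ov}
    (hs : Shuffle w (wa h ++ wb k) w') (hz : z.map Prod.fst = w) (hok : GOk h k z) :
    ∃ z' : Ov, z'.map Prod.fst = w' ∧ unm z' = unm z ∧ mA z' = mA z + h ∧ mB z' = mB z + k ∧
      GOk h k z' := by
  obtain ⟨z', h1, h2, h3, h4, h5⟩ := insertA hh hk hs rfl (le_refl h) (p := 0) (q := 0) hz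
    (fun n => by
      have := hok n
      have d : (0 + h + mA (z.take n)) = mA (z.take n) + h := by ring
      rw [d, Nat.add_div_right _ hh]
      have d3 : k * (mA (z.take n)/h + 1) = k * (mA (z.take n)/h) + k := by ring
      omega)
  exact ⟨z', h1, h2, h3, h4, fun n => by have := h5 n; simpa using this⟩

lemma extract (hh : 1 ≤ h) (hk : 1 ≤ k) {v w : List AB}
    (hd : DerivesStar {wa h ++ wb k} v w) :
    ∃ (m : ℕ) (z : Ov), z.map Prod.fst = w ∧ unm z = v ∧ mA z = m*h ∧ mB z = m*k ∧
      GOk h k z ∧ (v = w ∨ 1 ≤ m) := by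
  have mA0 : ∀ (l : List AB), mA (l.map (fun x => (x, false))) = 0 := by
    intro l; induction l with
    | nil => simp
    | cons x l ih => simpa using ih
  have mB0 : ∀ (l : List AB), mB (l.map (fun x => (x, false))) = 0 := by
    intro l; induction l with
    | nil => simp
    | cons x l ih => simpa using ih
  induction hd with
  | refl =>
    refine ⟨0, v.map (fun x => (x, false)), ?_, ?_, ?_, ?_, ?_, Or.inl rfl⟩
    · rw [List.map_map]
      have : (Prod.fst ∘ fun x : AB => (x, false)) = id := rfl
      rw [this, List.map_id]
    · induction v with
      | nil => simp
      | cons x v ih => simpa using ih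
    · simp [mA0]
    · simp [mB0]
    · intro n
      rw [← List.map_take]
      rw [mA0, mB0]
      simp
  | @tail w₁ w₂ hd hstep ih =>
    obtain ⟨m, z, h1, h2, h3, h4, h5, h6⟩ := ih
    obtain ⟨u', hu', hs⟩ := hstep
    have hu'' : u' = wa h ++ wb k := hu'
    subst hu''
    obtain ⟨z', g1, g2, g3, g4, g5⟩ := ok_step hh hk hs h1 h5
    exact ⟨m+1, z', g1, g2.trans h2, by rw [g3, h3]; ring, by rw [g4, h4]; ring, g5, Or.inr (by omega)⟩

end Insert2


/-! ### counting -/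

def cA (w : List AB) : ℕ := w.count a
def cB (w : List AB) : ℕ := w.count b

@[simp] lemma cA_nil : cA [] = 0 := rfl
@[simp] lemma cB_nil : cB [] = 0 := rfl
@[simp] lemma cA_append (u v : List AB) : cA (u ++ v) = cA u + cA v := by
  simp [cA, List.count_append]
@[simp] lemma cB_append (u v : List AB) : cB (u ++ v) = cB u + cB v := by
  simp [cB, List.count_append]
@[simp] lemma cA_wa (n : ℕ) : cA (wa n) = n := by simp [cA, wa, List.count_replicate]
@[simp] lemma cA_wb (n : ℕ) : cA (wb n) = 0 := by simp [cA, wb, List.count_replicate]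
@[simp] lemma cB_wa (n : ℕ) : cB (wa n) = 0 := by simp [cB, wa, List.count_replicate]
@[simp] lemma cB_wb (n : ℕ) : cB (wb n) = n := by simp [cB, wb, List.count_replicate]
@[simp] lemma wa_length (n : ℕ) : (wa n).length = n := by simp [wa]
@[simp] lemma wb_length (n : ℕ) : (wb n).length = n := by simp [wb]
@[simp] lemma cA_cons_a (w : List AB) : cA (a :: w) = cA w + 1 := by simp [cA]
@[simp] lemma cA_cons_b (w : List AB) : cA (b :: w) = cA w := by simp [cA]
@[simp] lemma cB_cons_a (w : List AB) : cB (a :: w) = cB w := by simp [cB]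
@[simp] lemma cB_cons_b (w : List AB) : cB (b :: w) = cB w + 1 := by simp [cB]

lemma cA_blk {h k : ℕ} (hh : 1 ≤ h) : cA (Blk h k) = h := by
  simp [Blk]; omega
lemma cB_blk {h k : ℕ} (hk : 1 ≤ k) : cB (Blk h k) = k := by
  simp [Blk]; omega

lemma cA_npow_blk {h k : ℕ} (hh : 1 ≤ h) (t : ℕ) : cA (npow (Blk h k) t) = t * h := by
  induction t with
  | zero => simp [npow]
  | succ t ih => simp [npow, ih, cA_blk hh]; ring
lemma cB_npow_blk {h k : ℕ} (hk : 1 ≤ k) (t : ℕ) : cB (npow (Blk h k) t) = t * k := by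
  induction t with
  | zero => simp [npow]
  | succ t ih => simp [npow, ih, cB_blk hk]; ring

lemma cA_S2R {h k : ℕ} (hh : 1 ≤ h) (n : ℕ) : cA (S2R h k n) = 5*h + n*h := by
  simp [S2R, cA_npow_blk hh]; ring
lemma cB_S2R {h k : ℕ} (hk : 1 ≤ k) (n : ℕ) : cB (S2R h k n) = 5*k + n*k := by
  simp [S2R, cB_npow_blk hk]; ring

/-- partition of counts into marked and unmarked -/
lemma part_cA (z : Ov) : cA (z.map Prod.fst) = mA z + cA (unm z) := by
  induction z with
  | nil => simp [mA, unm, cA]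
  | cons p z ih =>
    obtain ⟨x, c⟩ := p
    rcases x <;> rcases c <;>
      simp [mA, List.countP_cons, unm, List.filter_cons, cA, List.count_cons] at * <;> omega
lemma part_cB (z : Ov) : cB (z.map Prod.fst) = mB z + cB (unm z) := by
  induction z with
  | nil => simp [mB, unm, cB]
  | cons p z ih =>
    obtain ⟨x, c⟩ := p
    rcases x <;> rcases c <;>
      simp [mB, List.countP_cons, unm, List.filter_cons, cB, List.count_cons] at * <;> omega

/-- split an overlay along a decomposition of its word -/
lemma split_fst : ∀ {z : Ov} {P Q : List AB}, z.map Prod.fst = P ++ Q →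
    ∃ z1 z2, z = z1 ++ z2 ∧ z1.map Prod.fst = P ∧ z2.map Prod.fst = Q := by
  intro z P
  induction P generalizing z with
  | nil => intro Q hz; exact ⟨[], z, rfl, rfl, by simpa using hz⟩
  | cons x P ih =>
    intro Q hz
    rcases z with _ | ⟨⟨y, c⟩, zt⟩
    · simp at hz
    · simp only [List.map_cons, List.cons_append, List.cons.injEq] at hz
      obtain ⟨rfl, hzt⟩ := hz
      obtain ⟨z1, z2, rfl, e1, e2⟩ := ih hzt
      exact ⟨(y, c) :: z1, z2, rfl, by simp [e1], e2⟩

lemma gok_prefix {h k : ℕ} {z z1 z2 : Ov} (hok : GOk h k z) (hsplit : z = z1 ++ z2) :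
    mB z1 ≤ k * (mA z1 / h) := by
  have := hok z1.length
  rwa [hsplit, List.take_left] at this

/-! ### prefix analysis -/

lemma prefix_append_cases {P X Y : List AB} (hP : P <+: X ++ Y) :
    P <+: X ∨ ∃ Q, Q <+: Y ∧ P = X ++ Q := by
  obtain ⟨R, hR⟩ := hP
  rcases List.append_eq_append_iff.1 hR with ⟨a', ha1, ha2⟩ | ⟨c', hc1, hc2⟩
  · left; exact ⟨a', ha1.symm⟩
  · right; exact ⟨c', ⟨R, hc2.symm⟩, hc1⟩



lemma prefix_cons_cases {P : List AB} {x : AB} {L : List AB} (hP : P <+: x :: L) :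
    P = [] ∨ ∃ P', P = x :: P' ∧ P' <+: L := by
  rcases P with _ | ⟨y, P'⟩
  · exact Or.inl rfl
  · obtain ⟨R, hR⟩ := hP
    simp only [List.cons_append, List.cons.injEq] at hR
    exact Or.inr ⟨P', by rw [hR.1], ⟨R, hR.2⟩⟩

lemma prefix_wa {P : List AB} {n : ℕ} (hP : P <+: wa n) : P = wa P.length ∧ P.length ≤ n := by
  constructor
  · have hmem : ∀ x ∈ P, x = a := by
      intro x hx
      exact List.eq_of_mem_replicate (hP.subset hx)
    exact List.eq_replicate_of_mem hmem
  · simpa [wa] using hP.length_le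

lemma prefix_wb {P : List AB} {n : ℕ} (hP : P <+: wb n) : P = wb P.length ∧ P.length ≤ n := by
  constructor
  · have hmem : ∀ x ∈ P, x = b := by
      intro x hx
      exact List.eq_of_mem_replicate (hP.subset hx)
    exact List.eq_replicate_of_mem hmem
  · simpa [wb] using hP.length_le

lemma prefix_npow {h k t : ℕ} {Q : List AB} (hQ : Q <+: npow (Blk h k) t) :
    ∃ s R, s ≤ t ∧ R <+: Blk h k ∧ Q = npow (Blk h k) s ++ R ∧ (s < t ∨ R = []) := by
  induction t generalizing Q with
  | zero =>
    have : Q = [] := by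
      simpa [npow] using (List.prefix_nil).1 (by simpa [npow] using hQ)
    exact ⟨0, [], le_refl 0, ⟨Blk h k, by simp⟩, by simp [this, npow], Or.inr rfl⟩
  | succ t ih =>
    rw [show npow (Blk h k) (t+1) = Blk h k ++ npow (Blk h k) t from rfl] at hQ
    rcases prefix_append_cases hQ with h1 | ⟨Q', hQ', rfl⟩
    · exact ⟨0, Q, by omega, h1, by simp [npow], Or.inl (by omega)⟩
    · obtain ⟨s, R, hs, hR, rfl, hlast⟩ := ih hQ'
      refine ⟨s+1, R, by omega, hR, by simp [npow, List.append_assoc], ?_⟩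
      rcases hlast with h1 | h1
      · exact Or.inl (by omega)
      · exact Or.inr h1

/-- counts of prefixes of a block -/
lemma prefix_blk {h k : ℕ} (hh : 2 ≤ h) (hk : 2 ≤ k) {R : List AB} (hR : R <+: Blk h k) :
    (cA R = 0 ∧ cB R = 0) ∨ (cA R = 1 ∧ cB R = 0) ∨
    (∃ c, c ≤ h-1 ∧ cA R = 1 + c ∧ cB R = 1) ∨
    (∃ d, d ≤ k-1 ∧ cA R = h ∧ cB R = 1 + d) := by
  have hblk : Blk h k = a :: (b :: (wa (h-1) ++ wb (k-1))) := by simp [Blk]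
  rw [hblk] at hR
  rcases prefix_cons_cases hR with rfl | ⟨P1, rfl, hP1⟩
  · left; simp
  · rcases prefix_cons_cases hP1 with rfl | ⟨P2, rfl, hP2⟩
    · right; left; simp
    · rcases prefix_append_cases hP2 with h1 | ⟨P3, hP3, rfl⟩
      · obtain ⟨he, hl⟩ := prefix_wa h1
        right; right; left
        exact ⟨P2.length, hl, by rw [he]; simp; omega, by rw [he]; simp⟩
      · obtain ⟨he, hl⟩ := prefix_wb hP3
        right; right; right
        refine ⟨P3.length, hl, ?_, ?_⟩
        · rw [he]; simp; omega
        · rw [he]; simp; omega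

/-- classification of prefixes of `S2R h k i` by their letter counts -/
lemma classifyPrefix {h k i : ℕ} (hh : 2 ≤ h) (hk : 2 ≤ k) {P : List AB}
    (hP : P <+: S2R h k i) :
    (cB P = 0 ∧ cA P ≤ 3*h) ∨
    (cA P = 3*h ∧ cB P ≤ 2*k) ∨
    (∃ s, s < i ∧ cA P = 3*h + s*h + 1 ∧ cB P = 2*k + s*k) ∨
    (∃ s c, s < i ∧ c ≤ h-1 ∧ cA P = 3*h + s*h + 1 + c ∧ cB P = 2*k + s*k + 1) ∨
    (∃ s d, s < i ∧ d ≤ k-1 ∧ cA P = 3*h + s*h + h ∧ cB P = 2*k + s*k + 1 + d) ∨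
    (∃ s, s ≤ i ∧ cA P = 3*h + s*h ∧ cB P = 2*k + s*k) ∨
    (∃ c, c ≤ 2*h ∧ cA P = 3*h + i*h + c ∧ cB P = 2*k + i*k) ∨
    (∃ d, d ≤ 3*k ∧ cA P = 5*h + i*h ∧ cB P = 2*k + i*k + d) := by
  have hS : S2R h k i = wa (3*h) ++ (wb (2*k) ++ (npow (Blk h k) i ++ (wa (2*h) ++ wb (3*k)))) := by
    simp [S2R, List.append_assoc]
  rw [hS] at hP
  rcases prefix_append_cases hP with h1 | ⟨P1, hP1, rfl⟩
  · obtain ⟨he, hl⟩ := prefix_wa h1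
    left; rw [he]; simp [hl]
  rcases prefix_append_cases hP1 with h1 | ⟨P2, hP2, rfl⟩
  · obtain ⟨he, hl⟩ := prefix_wb h1
    right; left; rw [he]; simp [hl]
  rcases prefix_append_cases hP2 with h1 | ⟨P3, hP3, rfl⟩
  · -- inside the blocks
    obtain ⟨s, R, hs, hR, rfl, hlast⟩ := prefix_npow h1
    have eA : cA (wa (3*h) ++ (wb (2*k) ++ (npow (Blk h k) s ++ R))) = 3*h + s*h + cA R := by
      simp [cA_npow_blk (by omega : 1 ≤ h)]; ring
    have eB : cB (wa (3*h) ++ (wb (2*k) ++ (npow (Blk h k) s ++ R))) = 2*k + s*k + cB R := by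
      simp [cB_npow_blk (by omega : 1 ≤ k)]; ring
    have hlt : R ≠ [] → s < i := by
      intro hne
      rcases hlast with h1 | h1
      · exact h1
      · exact absurd h1 hne
    rcases prefix_blk hh hk hR with ⟨e1, e2⟩ | ⟨e1, e2⟩ | ⟨c, hc, e1, e2⟩ | ⟨d, hd, e1, e2⟩
    · -- boundary s
      right; right; right; right; right; left
      exact ⟨s, hs, by omega, by omega⟩
    · -- F3a
      have hsi : s < i := hlt (by intro hR0; rw [hR0] at e1; simp at e1)
      right; right; left
      exact ⟨s, hsi, by omega, by omega⟩
    · -- F3b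
      have hsi : s < i := hlt (by intro hR0; rw [hR0] at e2; simp at e2)
      right; right; right; left
      exact ⟨s, c, hsi, hc, by omega, by omega⟩
    · -- F3c
      have hsi : s < i := hlt (by intro hR0; rw [hR0] at e2; simp at e2; omega)
      right; right; right; right; left
      exact ⟨s, d, hsi, hd, by omega, by omega⟩
  · -- after the blocks
    rcases prefix_append_cases hP3 with h1 | ⟨P4, hP4, rfl⟩
    · obtain ⟨he, hl⟩ := prefix_wa h1
      right; right; right; right; right; right; left
      refine ⟨P3.length, hl, ?_, ?_⟩
      · rw [he]; simp [cA_npow_blk (by omega : 1 ≤ h)]; ring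
      · rw [he]; simp [cB_npow_blk (by omega : 1 ≤ k)]
    · obtain ⟨he, hl⟩ := prefix_wb hP4
      right; right; right; right; right; right; right
      refine ⟨P4.length, hl, ?_, ?_⟩
      · rw [he]; simp [cA_npow_blk (by omega : 1 ≤ h)]; ring
      · rw [he]; simp [cB_npow_blk (by omega : 1 ≤ k)]; ring



lemma div_helper {h : ℕ} (hh : 1 ≤ h) (d r : ℕ) (hr : r < h) : (d*h + r)/h = d := by
  rw [Nat.add_comm, Nat.add_mul_div_right _ _ (by omega : 0 < h), Nat.div_eq_of_lt hr]
  omega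

lemma atQ {h k i : ℕ} (hh : 2 ≤ h) (hk : 2 ≤ k) (t : ℕ) {A B MA MB : ℕ}
    (eA : A + MA = 3*h + t*h) (eB : B + MB = 2*k + t*k)
    (hok : MB ≤ k * (MA / h))
    (cls :
      (B = 0 ∧ A ≤ 3*h) ∨
      (A = 3*h ∧ B ≤ 2*k) ∨
      (∃ s, s < i ∧ A = 3*h + s*h + 1 ∧ B = 2*k + s*k) ∨
      (∃ s c, s < i ∧ c ≤ h-1 ∧ A = 3*h + s*h + 1 + c ∧ B = 2*k + s*k + 1) ∨
      (∃ s d, s < i ∧ d ≤ k-1 ∧ A = 3*h + s*h + h ∧ B = 2*k + s*k + 1 + d) ∨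
      (∃ s, s ≤ i ∧ A = 3*h + s*h ∧ B = 2*k + s*k) ∨
      (∃ c, c ≤ 2*h ∧ A = 3*h + i*h + c ∧ B = 2*k + i*k) ∨
      (∃ d, d ≤ 3*k ∧ A = 5*h + i*h ∧ B = 2*k + i*k + d)) :
    (B = 0 ∧ A ≤ h) ∨ (∃ s, s ≤ i ∧ A = 3*h + s*h ∧ B = 2*k + s*k) ∨ (A = 5*h + i*h) := by
  rcases cls with ⟨hB, hA⟩ | ⟨hA, hB⟩ | ⟨s, hsi, hA, hB⟩ | ⟨s, c, hsi, hc, hA, hB⟩ |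
    ⟨s, d, hsi, hd, hA, hB⟩ | ⟨s, hsi, hA, hB⟩ | ⟨c, hc, hA, hB⟩ | ⟨d, hd, hA, hB⟩
  · -- F1
    rcases le_or_gt A h with h1 | h1
    · exact Or.inl ⟨hB, h1⟩
    · exfalso
      have hdiv : MA / h ≤ t + 1 := by
        have e0 : ((t+1)*h + (h-1))/h = t+1 := div_helper (by omega) _ _ (by omega)
        have e1 : (t+1)*h = t*h + h := by ring
        have hle : MA ≤ (t+1)*h + (h-1) := by omega
        calc MA / h ≤ ((t+1)*h + (h-1))/h := Nat.div_le_div_right hle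
        _ = t+1 := e0
      have h2 := Nat.mul_le_mul_left k hdiv
      have h3 : k * (t+1) = t*k + k := by ring
      omega
  · -- F2
    have hMA : MA = t*h := by omega
    have hdiv : MA / h = t := by
      rw [hMA, show t*h = t*h + 0 from rfl, div_helper (by omega) t 0 (by omega)]
    rw [hdiv] at hok
    have h3 : k * t = t*k := by ring
    have hB2 : B = 2*k := by omega
    exact Or.inr (Or.inl ⟨0, by omega, by omega, by omega⟩)
  · -- F3a : killed
    exfalso
    rcases Nat.lt_or_ge s t with hst | hst
    · obtain ⟨d, rfl⟩ : ∃ d, t = s + (d+1) := ⟨t - s - 1, by omega⟩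
      have e1 : (s+(d+1))*h = s*h + d*h + h := by ring
      have e2 : (s+(d+1))*k = s*k + d*k + k := by ring
      have eM : MA = d*h + (h-1) := by omega
      have ediv : MA / h = d := by rw [eM]; exact div_helper (by omega) d (h-1) (by omega)
      rw [ediv] at hok
      have e3 : k * d = d*k := by ring
      omega
    · have := Nat.mul_le_mul_right h hst
      omega
  · -- F3b : killed
    exfalso
    rcases Nat.lt_or_ge s t with hst | hst
    · obtain ⟨d, rfl⟩ : ∃ d, t = s + (d+1) := ⟨t - s - 1, by omega⟩
      have e1 : (s+(d+1))*h = s*h + d*h + h := by ring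
      have e2 : (s+(d+1))*k = s*k + d*k + k := by ring
      have eM : MA = d*h + (h-1-c) := by omega
      have ediv : MA / h = d := by rw [eM]; exact div_helper (by omega) d (h-1-c) (by omega)
      rw [ediv] at hok
      have e3 : k * d = d*k := by ring
      omega
    · have := Nat.mul_le_mul_right h hst
      omega
  · -- F3c : boundary s+1 or killed
    rcases Nat.lt_or_ge s t with hst | hst
    · obtain ⟨e, rfl⟩ : ∃ e, t = s + (e+1) := ⟨t - s - 1, by omega⟩
      have e1 : (s+(e+1))*h = s*h + e*h + h := by ring
      have e2 : (s+(e+1))*k = s*k + e*k + k := by ring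
      have eM : MA = e*h := by omega
      have ediv : MA / h = e := by
        rw [eM, show e*h = e*h + 0 from rfl, div_helper (by omega) e 0 (by omega)]
      rw [ediv] at hok
      have e3 : k * e = e*k := by ring
      have hdk : d = k - 1 := by omega
      refine Or.inr (Or.inl ⟨s+1, by omega, by rw [hA]; ring_nf, ?_⟩)
      have : (s+1)*k = s*k + k := by ring
      omega
    · exfalso
      have := Nat.mul_le_mul_right h hst
      omega
  · -- F6 boundary
    exact Or.inr (Or.inl ⟨s, hsi, hA, hB⟩)
  · -- F7
    rcases Nat.eq_zero_or_pos c with rfl | hc1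
    · exact Or.inr (Or.inl ⟨i, le_refl i, by omega, by omega⟩)
    · exfalso
      rcases Nat.lt_or_ge i t with hst | hst
      · obtain ⟨d, rfl⟩ : ∃ d, t = i + (d+1) := ⟨t - i - 1, by omega⟩
        have e1 : (i+(d+1))*h = i*h + d*h + h := by ring
        have e2 : (i+(d+1))*k = i*k + d*k + k := by ring
        rcases le_or_gt c h with hch | hch
        · have eM : MA = d*h + (h-c) := by omega
          have ediv : MA / h = d := by rw [eM]; exact div_helper (by omega) d (h-c) (by omega)
          rw [ediv] at hok
          have e3 : k * d = d*k := by ring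
          omega
        · -- c ∈ (h, 2h] : need d ≥ 1
          rcases d with _ | d'
          · have e4 : (i+(0+1))*h = i*h + h := by ring
            omega
          · have e4 : (d'+1)*h = d'*h + h := by ring
            have e5 : (d'+1)*k = d'*k + k := by ring
            have eM : MA = d'*h + (2*h-c) := by omega
            have ediv : MA / h = d' := by rw [eM]; exact div_helper (by omega) d' (2*h-c) (by omega)
            rw [ediv] at hok
            have e3 : k * d' = d'*k := by ring
            omega
      · have := Nat.mul_le_mul_right h hst
        omega
  · -- F8 : late
    exact Or.inr (Or.inr hA)




def Cut (h k t : ℕ) : List AB := wa (3*h) ++ wb (2*k) ++ npow (Blk h k) t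

lemma cA_cut {h k t : ℕ} (hh : 1 ≤ h) : cA (Cut h k t) = 3*h + t*h := by
  simp [Cut, cA_npow_blk hh]
lemma cB_cut {h k t : ℕ} (hk : 1 ≤ k) : cB (Cut h k t) = 2*k + t*k := by
  simp [Cut, cB_npow_blk hk]

lemma S2R_cut {h k t j : ℕ} (htj : t ≤ j) :
    S2R h k j = Cut h k t ++ (npow (Blk h k) (j-t) ++ wa (2*h) ++ wb (3*k)) := by
  obtain ⟨d, rfl⟩ : ∃ d, j = t + d := ⟨j - t, by omega⟩
  rw [show t + d - t = d from by omega]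
  unfold S2R Cut
  rw [npow_add]
  simp [List.append_assoc]

lemma cut_succ {h k t : ℕ} : Cut h k (t+1) = Cut h k t ++ Blk h k := by
  unfold Cut
  rw [show t + 1 = t + 1 from rfl, npow_add]
  simp [npow, List.append_assoc]

lemma core {h k : ℕ} (hh : 2 ≤ h) (hk : 2 ≤ k) {i j m : ℕ} (hij : i < j)
    {z : Ov} (hz : z.map Prod.fst = S2R h k j) (hu : unm z = S2R h k i)
    (hma : mA z = m*h) (hmb : mB z = m*k) (hok : GOk h k z) : False := by
  -- j = m + i
  have hmj : j = m + i := by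
    have hp := part_cA z
    rw [hz, hu, cA_S2R (by omega), cA_S2R (by omega), hma] at hp
    have : j * h = (m + i) * h := by
      have e : (m+i)*h = m*h + i*h := by ring
      omega
    exact Nat.eq_of_mul_eq_mul_right (by omega) this
  -- main induction
  have main : ∀ t, t ≤ j → ∃ z1 z2, z = z1 ++ z2 ∧ z1.map Prod.fst = Cut h k t ∧
      ((cB (unm z1) = 0 ∧ cA (unm z1) ≤ h) ∨
       (t ≤ i ∧ cA (unm z1) = 3*h + t*h ∧ cB (unm z1) = 2*k + t*k)) := by
    intro t
    induction t with
    | zero =>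
      intro htj
      obtain ⟨z1, z2, hsplit, hf1, hf2⟩ := split_fst (z := z)
        (P := Cut h k 0) (Q := npow (Blk h k) j ++ wa (2*h) ++ wb (3*k))
        (by rw [hz, S2R_cut (by omega : 0 ≤ j)]; simp)
      have eA : cA (unm z1) + mA z1 = 3*h + 0*h := by
        have := part_cA z1
        rw [hf1, cA_cut (by omega)] at this
        omega
      have eB : cB (unm z1) + mB z1 = 2*k + 0*k := by
        have := part_cB z1
        rw [hf1, cB_cut (by omega)] at this
        omega
      have hokQ : mB z1 ≤ k * (mA z1 / h) := gok_prefix hok hsplit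
      have hpre : unm z1 <+: S2R h k i := by
        rw [← hu, hsplit, unm_append]; exact ⟨unm z2, rfl⟩
      have cls := classifyPrefix hh hk hpre
      rcases atQ hh hk 0 eA eB hokQ cls with hE | ⟨s, hsi, hA, hB⟩ | hL
      · exact ⟨z1, z2, hsplit, hf1, Or.inl hE⟩
      · have hs0 : s = 0 := by
          have : s * h = 0 := by omega
          rcases Nat.mul_eq_zero.1 this with h1 | h1
          · exact h1
          · omega
        subst hs0
        exact ⟨z1, z2, hsplit, hf1, Or.inr ⟨by omega, by omega, by omega⟩⟩
      · exfalso; omega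
    | succ t ih =>
      intro ht1
      obtain ⟨z1, z2, hsplit, hf1, hbr⟩ := ih (by omega)
      -- decompose z2
      have hf2 : z2.map Prod.fst = Blk h k ++ (npow (Blk h k) (j-t-1) ++ wa (2*h) ++ wb (3*k)) := by
        have e1 : z1.map Prod.fst ++ z2.map Prod.fst = S2R h k j := by
          rw [← List.map_append, ← hsplit, hz]
        rw [hf1, S2R_cut (by omega : t ≤ j)] at e1
        have e2 := List.append_cancel_left e1
        rw [e2]
        have : j - t = (j - t - 1) + 1 := by omega
        rw [this, show npow (Blk h k) ((j-t-1)+1) = Blk h k ++ npow (Blk h k) (j-t-1) from rfl]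
        simp [List.append_assoc]
      obtain ⟨zb, z3, hsplit2, hfb, hf3⟩ := split_fst hf2
      have hzsplit : z = (z1 ++ zb) ++ z3 := by rw [hsplit, hsplit2]; simp [List.append_assoc]
      have hf1' : (z1 ++ zb).map Prod.fst = Cut h k (t+1) := by
        rw [List.map_append, hf1, hfb, cut_succ]
      -- counts
      have eA : cA (unm (z1 ++ zb)) + mA (z1 ++ zb) = 3*h + (t+1)*h := by
        have := part_cA (z1 ++ zb)
        rw [hf1', cA_cut (by omega)] at this
        omega
      have eB : cB (unm (z1 ++ zb)) + mB (z1 ++ zb) = 2*k + (t+1)*k := by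
        have := part_cB (z1 ++ zb)
        rw [hf1', cB_cut (by omega)] at this
        omega
      have hokQ : mB (z1 ++ zb) ≤ k * (mA (z1 ++ zb) / h) := gok_prefix hok hzsplit
      have hpre : unm (z1 ++ zb) <+: S2R h k i := by
        refine ⟨unm z3, ?_⟩
        rw [← unm_append, ← hzsplit, hu]
      have cls := classifyPrefix hh hk hpre
      -- segment counts
      have hAb : cA (unm zb) + mA zb = h := by
        have := part_cA zb
        rw [hfb, cA_blk (by omega)] at this
        omega
      have hBb : cB (unm zb) + mB zb = k := by
        have := part_cB zb
        rw [hfb, cB_blk (by omega)] at this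
        omega
      have hA' : cA (unm (z1 ++ zb)) = cA (unm z1) + cA (unm zb) := by
        rw [unm_append, cA_append]
      have hB' : cB (unm (z1 ++ zb)) = cB (unm z1) + cB (unm zb) := by
        rw [unm_append, cB_append]
      rcases atQ hh hk (t+1) eA eB hokQ cls with hE | ⟨s, hsi, hA, hB⟩ | hL
      · exact ⟨z1 ++ zb, z3, hzsplit, hf1', Or.inl hE⟩
      · -- bound case : pin s = t+1 or contradiction
        rcases hbr with ⟨hB1, hA1⟩ | ⟨hti, hA1, hB1⟩
        · -- previous EARLY : impossible since B' ≥ 2k > k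
          exfalso
          have : cB (unm (z1 ++ zb)) ≤ k := by omega
          omega
        · -- previous BOUND(t)
          rcases lt_trichotomy s (t+1) with hst | hst | hst
          · -- s ≤ t : full block deletion, kill at the M cut
            exfalso
            have hsk : s * k ≤ t * k := Nat.mul_le_mul_right k (by omega)
            have hsh : s * h ≤ t * h := Nat.mul_le_mul_right h (by omega)
            have e1 : (t+1)*h = t*h + h := by ring
            have e2 : (t+1)*k = t*k + k := by ring
            -- survivor gains are 0
            have hAb0 : cA (unm zb) = 0 := by omega
            have hBb0 : cB (unm zb) = 0 := by omega
            -- split zb into the first two letters and the rest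
            obtain ⟨zab, zr, hsplitb, hfab, hfr⟩ := split_fst (z := zb)
              (P := [a, b]) (Q := wa (h-1) ++ wb (k-1)) (by rw [hfb]; simp [Blk])
            have hMab : z = (z1 ++ zab) ++ (zr ++ z3) := by
              rw [hzsplit, hsplitb]; simp [List.append_assoc]
            have hokM : mB (z1 ++ zab) ≤ k * (mA (z1 ++ zab) / h) := gok_prefix hok hMab
            have hAab : cA (unm zab) = 0 := by
              have : unm zb = unm zab ++ unm zr := by rw [hsplitb, unm_append]
              have := congrArg cA this
              rw [cA_append] at this
              omega
            have hBab : cB (unm zab) = 0 := by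
              have : unm zb = unm zab ++ unm zr := by rw [hsplitb, unm_append]
              have := congrArg cB this
              rw [cB_append] at this
              omega
            have eMA : mA (z1 ++ zab) = 1 := by
              have := part_cA (z1 ++ zab)
              rw [List.map_append, hf1, hfab] at this
              rw [cA_append, cA_cut (by omega : 1 ≤ h)] at this
              rw [unm_append, cA_append, hA1, hAab] at this
              simp at this
              omega
            have eMB : mB (z1 ++ zab) = 1 := by
              have := part_cB (z1 ++ zab)
              rw [List.map_append, hf1, hfab] at this
              rw [cB_append, cB_cut (by omega : 1 ≤ k)] at this
              rw [unm_append, cB_append, hB1, hBab] at this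
              simp at this
              omega
            rw [eMA, eMB] at hokM
            rw [Nat.div_eq_of_lt (by omega : 1 < h)] at hokM
            simp at hokM
          · -- s = t+1
            subst hst
            exact ⟨z1 ++ zb, z3, hzsplit, hf1', Or.inr ⟨hsi, hA, hB⟩⟩
          · -- s ≥ t+2 : impossible
            exfalso
            have hsk : (t+2) * k ≤ s * k := Nat.mul_le_mul_right k (by omega)
            have e1 : (t+2)*k = t*k + 2*k := by ring
            have e2 : (t+1)*k = t*k + k := by ring
            omega
      · -- late case : impossible
        exfalso
        have hAb1 : cA (unm zb) ≤ h := by omega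
        rcases hbr with ⟨hB1, hA1⟩ | ⟨hti, hA1, hB1⟩
        · omega
        · have hth : t * h ≤ i * h := Nat.mul_le_mul_right h hti
          omega
  -- final contradiction
  obtain ⟨z1, z2, hsplit, hf1, hbr⟩ := main j (le_refl j)
  rcases hbr with ⟨hB1, hA1⟩ | ⟨hji, hA1, hB1⟩
  · -- early at the end : too many marked b's
    have eB : cB (unm z1) + mB z1 = 2*k + j*k := by
      have := part_cB z1
      rw [hf1, cB_cut (by omega)] at this
      omega
    have hle : mB z1 ≤ mB z := by
      rw [hsplit, mB_append]; omega
    have e1 : j*k = m*k + i*k := by rw [hmj]; ring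
    omega
  · omega



theorem stmt2 (h k : ℕ) (hh : 2 ≤ h) (hk : 2 ≤ k) :
    (∀ n : ℕ, 1 ≤ n → S2 h k n ∈ LL {wa h ++ wb k}) ∧
    (∀ i j : ℕ, 1 ≤ i → i < j → ¬ DerivesStar {wa h ++ wb k} (S2 h k i) (S2 h k j)) ∧
    ¬ IsWqoOn (DerivesStar {wa h ++ wb k}) (LL {wa h ++ wb k}) := by
  have part2 : ∀ i j : ℕ, 1 ≤ i → i < j → ¬ DerivesStar {wa h ++ wb k} (S2 h k i) (S2 h k j) := by
    intro i j h1i hij hder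
    obtain ⟨m, z, hfst, hunm, hma, hmb, hok, hcase⟩ := extract (by omega) (by omega) hder
    rw [S2_eq_S2R] at hfst hunm
    exact core hh hk hij hfst hunm hma hmb hok
  refine ⟨fun n hn => mem_LL_S2 hh hk n hn, part2, ?_⟩
  intro hw
  obtain ⟨i, j, hij, hrel⟩ := hw (fun n => S2 h k (n+1))
    (fun n => mem_LL_S2 hh hk (n+1) (by omega))
  exact part2 (i+1) (j+1) (by omega) (by omega) hrel

end ShuffleWqo
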